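/- Let e : [0,∞) → ℝⁿ and Ψ : [0,∞) → ℝ^{n×n} be continuously differentiable and satisfy ė = −e − Ψx − e(xᵀx) and Ψ̇ = exᵀ for some continuous x : [0,∞) → ℝⁿ. Then e and Ψ are bounded, and ∫₀^∞ ‖e(τ)‖² dτ < ∞ and ∫₀^∞ ‖e(τ)‖²‖x(τ)‖² dτ < ∞. -/

import Mathlib

open Matrix RealInnerProductSpace MeasureTheory

/-- Matrix-vector multiplication on Euclidean space. -/
noncomputable def mulVecE {n : ℕ} (M : Matrix (Fin n) (Fin n) ℝ) (x : EuclideanSpace ℝ (Fin n)) :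
    EuclideanSpace ℝ (Fin n) :=
  (WithLp.equiv 2 (Fin n → ℝ)).symm (M.mulVec ((WithLp.equiv 2 (Fin n → ℝ)) x))

/-- Along the adaptive error dynamics `ė = -e - Ψ x - e (xᵀx)`, `Ψ̇ = e xᵀ` with
continuous `x`, the signals `e` and `Ψ` are bounded on `[0, ∞)`, and both `‖e‖²` and
`‖e‖²‖x‖²` are integrable on `[0, ∞)`. -/
theorem stmt_12 {n : ℕ}
    (x e : ℝ → EuclideanSpace ℝ (Fin n))
    (Ψ : ℝ → Matrix (Fin n) (Fin n) ℝ)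
    (hx : Continuous x)
    (he : ∀ t, 0 ≤ t →
      HasDerivAt e (-e t - mulVecE (Ψ t) (x t) - (⟪x t, x t⟫) • e t) t)
    (hΨ : ∀ i j, ∀ t, 0 ≤ t →
      HasDerivAt (fun s => Ψ s i j) (e t i * x t j) t) :
    (∃ C : ℝ, ∀ t, 0 ≤ t → ‖e t‖ ≤ C ∧ ∀ i j, |Ψ t i j| ≤ C) ∧
    IntegrableOn (fun τ => ‖e τ‖ ^ 2) (Set.Ici (0 : ℝ)) ∧
    IntegrableOn (fun τ => ‖e τ‖ ^ 2 * ‖x τ‖ ^ 2) (Set.Ici (0 : ℝ)) := by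
  classical
  set V : ℝ → ℝ := fun t => (⟪e t, e t⟫ + ∑ i, ∑ j, Ψ t i j ^ 2) / 2 with hVdef
  set g : ℝ → ℝ := fun t => ‖e t‖ ^ 2 * (1 + ‖x t‖ ^ 2) with hgdef
  -- derivative of V
  have hV : ∀ t, 0 ≤ t → HasDerivAt V (-(g t)) t := by
    intro t ht
    have hD := he t ht
    have h1 := hD.inner ℝ hD
    have h2 : HasDerivAt (fun s => ∑ i, ∑ j, Ψ s i j ^ 2)
        (∑ i, ∑ j, 2 * Ψ t i j * (e t i * x t j)) t := by
      refine HasDerivAt.fun_sum fun i _ => HasDerivAt.fun_sum fun j _ => ?_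
      simpa [mul_comm, mul_assoc, mul_left_comm] using ((hΨ i j t ht).fun_pow 2)
    have h3 := (h1.add h2).div_const 2
    refine HasDerivAt.congr_deriv h3 ?_
    have hmv : ∀ i, mulVecE (Ψ t) (x t) i = ∑ j, Ψ t i j * x t j := fun i => rfl
    have hinner : ⟪e t, mulVecE (Ψ t) (x t)⟫ = ∑ i, ∑ j, Ψ t i j * (e t i * x t j) := by
      simp only [PiLp.inner_apply, RCLike.inner_apply, conj_trivial, hmv, Finset.mul_sum, Finset.sum_mul]
      exact Finset.sum_congr rfl fun i _ => Finset.sum_congr rfl fun j _ => by ring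
    have hee : ⟪e t, e t⟫ = ‖e t‖ ^ 2 := real_inner_self_eq_norm_sq (e t)
    have hxx : ⟪x t, x t⟫ = ‖x t‖ ^ 2 := real_inner_self_eq_norm_sq (x t)
    have hexp : ⟪e t, -e t - mulVecE (Ψ t) (x t) - (⟪x t, x t⟫) • e t⟫
        = -‖e t‖ ^ 2 - (∑ i, ∑ j, Ψ t i j * (e t i * x t j)) - ‖x t‖ ^ 2 * ‖e t‖ ^ 2 := by
      rw [inner_sub_right, inner_sub_right, inner_neg_right, real_inner_smul_right,
        hinner, hee, hxx]
    have hc : ⟪-e t - mulVecE (Ψ t) (x t) - (⟪x t, x t⟫) • e t, e t⟫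
        = ⟪e t, -e t - mulVecE (Ψ t) (x t) - (⟪x t, x t⟫) • e t⟫ :=
      real_inner_comm _ _
    rw [hc, hexp]
    have h2s : ∑ i, ∑ j, 2 * Ψ t i j * (e t i * x t j)
        = 2 * ∑ i, ∑ j, Ψ t i j * (e t i * x t j) := by
      simp [Finset.mul_sum, mul_assoc]
    rw [h2s]
    have hg' : g t = ‖e t‖ ^ 2 * (1 + ‖x t‖ ^ 2) := rfl
    rw [hg']; ring
  -- continuity of e on Ici 0 and of V
  have heC : ContinuousOn e (Set.Ici 0) := fun t ht =>
    ((he t ht).continuousAt).continuousWithinAt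
  have hVC : ContinuousOn V (Set.Ici 0) := fun t ht =>
    ((hV t ht).continuousAt).continuousWithinAt
  have hVanti : AntitoneOn V (Set.Ici (0:ℝ)) := by
    refine antitoneOn_of_deriv_nonpos (convex_Ici 0) hVC ?_ ?_
    · intro t ht
      rw [interior_Ici] at ht
      exact ((hV t (le_of_lt ht)).differentiableAt).differentiableWithinAt
    · intro t ht
      rw [interior_Ici] at ht
      rw [(hV t (le_of_lt ht)).deriv]
      have : (0:ℝ) ≤ g t := by positivity
      linarith
  have hVnonneg : ∀ t, 0 ≤ V t := by
    intro t
    have h1 : (0:ℝ) ≤ ⟪e t, e t⟫ := real_inner_self_nonneg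
    have h2 : (0:ℝ) ≤ ∑ i, ∑ j, Ψ t i j ^ 2 :=
      Finset.sum_nonneg fun i _ => Finset.sum_nonneg fun j _ => sq_nonneg _
    simp only [hVdef]; linarith
  have hVle : ∀ t, 0 ≤ t → V t ≤ V 0 := fun t ht =>
    hVanti Set.self_mem_Ici ht ht
  -- boundedness
  have hbound : ∃ C : ℝ, ∀ t, 0 ≤ t → ‖e t‖ ≤ C ∧ ∀ i j, |Ψ t i j| ≤ C := by
    refine ⟨Real.sqrt (2 * V 0), fun t ht => ?_⟩
    have hCsq : Real.sqrt (2 * V 0) ^ 2 = 2 * V 0 := by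
      rw [Real.sq_sqrt]; linarith [hVnonneg 0]
    have hCpos : 0 ≤ Real.sqrt (2 * V 0) := Real.sqrt_nonneg _
    have hsum : (0:ℝ) ≤ ∑ i, ∑ j, Ψ t i j ^ 2 :=
      Finset.sum_nonneg fun i _ => Finset.sum_nonneg fun j _ => sq_nonneg _
    have hee : ⟪e t, e t⟫ = ‖e t‖ ^ 2 := real_inner_self_eq_norm_sq (e t)
    have hVt : (⟪e t, e t⟫ + ∑ i, ∑ j, Ψ t i j ^ 2) / 2 ≤ V 0 := hVle t ht
    rw [hee] at hVt
    constructor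
    · have h1 : ‖e t‖ ^ 2 ≤ 2 * V 0 := by linarith
      nlinarith [norm_nonneg (e t)]
    · intro i j
      have hmem : Ψ t i j ^ 2 ≤ ∑ i', ∑ j', Ψ t i' j' ^ 2 := by
        calc Ψ t i j ^ 2 ≤ ∑ j', Ψ t i j' ^ 2 :=
              Finset.single_le_sum (f := fun j' => Ψ t i j' ^ 2)
                (fun j' _ => sq_nonneg _) (Finset.mem_univ j)
          _ ≤ ∑ i', ∑ j', Ψ t i' j' ^ 2 :=
              Finset.single_le_sum (f := fun i' => ∑ j', Ψ t i' j' ^ 2)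
                (fun i' _ => Finset.sum_nonneg fun j' _ => sq_nonneg _) (Finset.mem_univ i)
      have h1 : Ψ t i j ^ 2 ≤ 2 * V 0 := by
        nlinarith [sq_nonneg (‖e t‖)]
      nlinarith [abs_nonneg (Ψ t i j), sq_abs (Ψ t i j)]
  -- continuity of g on Ici 0
  have hgC : ContinuousOn g (Set.Ici 0) := by
    apply ContinuousOn.mul
    · exact (heC.norm.pow 2)
    · exact (continuous_const.add (hx.norm.pow 2)).continuousOn
  have hgnonneg : ∀ t, 0 ≤ g t := fun t => by positivity
  -- FTC bound
  have hFTC : ∀ T, 0 ≤ T → (∫ τ in (0:ℝ)..T, g τ) = V 0 - V T := by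
    intro T hT
    have hderiv : ∀ t ∈ Set.uIcc (0:ℝ) T, HasDerivAt V (-(g t)) t := by
      intro t htm
      rw [Set.uIcc_of_le hT] at htm
      exact hV t htm.1
    have hint : IntervalIntegrable (fun t => -(g t)) volume 0 T := by
      apply ContinuousOn.intervalIntegrable
      rw [Set.uIcc_of_le hT]
      exact (hgC.mono (Set.Icc_subset_Ici_self)).neg
    have := intervalIntegral.integral_eq_sub_of_hasDerivAt hderiv hint
    rw [intervalIntegral.integral_neg] at this
    linarith
  -- integrability of g on Ioi 0
  have hgIci : IntegrableOn g (Set.Ici 0) := by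
    rw [integrableOn_Ici_iff_integrableOn_Ioi]
    refine integrableOn_Ioi_of_intervalIntegral_norm_bounded (V 0) 0
      (f := g) (b := fun T : ℝ => T) (l := Filter.atTop) (μ := volume)
      (fun T => ?_) Filter.tendsto_id ?_
    · rcases le_or_gt 0 T with hT | hT
      · exact ((hgC.mono (Set.Icc_subset_Ici_self (a := T) (b := 0))).integrableOn_compact
          isCompact_Icc).mono_set Set.Ioc_subset_Icc_self
      · rw [Set.Ioc_eq_empty (not_lt.mpr hT.le)]
        exact integrableOn_empty
    · filter_upwards [Filter.eventually_ge_atTop (0:ℝ)] with T hT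
      have : (∫ τ in (0:ℝ)..T, ‖g τ‖) = ∫ τ in (0:ℝ)..T, g τ := by
        refine intervalIntegral.integral_congr fun s hs => ?_
        exact Real.norm_of_nonneg (hgnonneg s)
      rw [this, hFTC T hT]
      linarith [hVnonneg T]
  -- measurability helpers
  have hm1 : AEStronglyMeasurable (fun τ => ‖e τ‖ ^ 2) (volume.restrict (Set.Ici (0:ℝ))) :=
    (heC.norm.pow 2).aestronglyMeasurable measurableSet_Ici
  have hm2 : AEStronglyMeasurable (fun τ => ‖e τ‖ ^ 2 * ‖x τ‖ ^ 2)
      (volume.restrict (Set.Ici (0:ℝ))) :=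
    ((heC.norm.pow 2).mul (hx.norm.pow 2).continuousOn).aestronglyMeasurable measurableSet_Ici
  refine ⟨hbound, ?_, ?_⟩
  · refine hgIci.integrable.mono' hm1 ?_
    refine Filter.Eventually.of_forall fun τ => ?_
    rw [Real.norm_of_nonneg (by positivity)]
    have hg' : g τ = ‖e τ‖ ^ 2 * (1 + ‖x τ‖ ^ 2) := rfl
    rw [hg']
    nlinarith [sq_nonneg (‖e τ‖), sq_nonneg (‖x τ‖)]
  · refine hgIci.integrable.mono' hm2 ?_
    refine Filter.Eventually.of_forall fun τ => ?_
    rw [Real.norm_of_nonneg (by positivity)]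
    have hg' : g τ = ‖e τ‖ ^ 2 * (1 + ‖x τ‖ ^ 2) := rfl
    rw [hg']
    nlinarith [sq_nonneg (‖e τ‖), sq_nonneg (‖x τ‖)]
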